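/- The formal power series A(y) with A(0) = 0 satisfying A(y)^3 + (y+1)A(y)^2 + (2y-1)A(y) + y = 0 exists, is unique, and has nonnegative integer coefficients. -/

import Mathlib

open PowerSeries

namespace SPaux

noncomputable def F (A : PowerSeries ℚ) : PowerSeries ℚ :=
  X + 2 * X * A + (X + 1) * A ^ 2 + A ^ 3

lemma constantCoeff_F (A : PowerSeries ℚ) (h : constantCoeff A = 0) :
    constantCoeff (F A) = 0 := by
  simp [F, map_add, map_mul, map_pow, h]

lemma coeff_F_congr (n : ℕ) (A B : PowerSeries ℚ)
    (hA : constantCoeff A = 0) (hB : constantCoeff B = 0)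
    (h : ∀ k < n, coeff k A = coeff k B) :
    coeff n (F A) = coeff n (F B) := by
  have hD : (X : PowerSeries ℚ) ^ n ∣ (A - B) := by
    rw [PowerSeries.X_pow_dvd_iff]
    intro m hm
    simp [map_sub, h m hm]
  have hC : (X : PowerSeries ℚ) ∣
      (2 * X + (X + 1) * (A + B) + (A ^ 2 + A * B + B ^ 2)) := by
    rw [PowerSeries.X_dvd_iff]
    simp [map_add, map_mul, map_pow, hA, hB]
  have hfact : F A - F B =
      (A - B) * (2 * X + (X + 1) * (A + B) + (A ^ 2 + A * B + B ^ 2)) := by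
    unfold F; ring
  have hdvd : (X : PowerSeries ℚ) ^ (n + 1) ∣ (F A - F B) := by
    rw [hfact, pow_succ]
    exact mul_dvd_mul hD hC
  have := (PowerSeries.X_pow_dvd_iff.mp hdvd) n (Nat.lt_succ_self n)
  rw [map_sub, sub_eq_zero] at this
  exact this

lemma constantCoeff_iter (m : ℕ) : constantCoeff (F^[m] 0) = 0 := by
  induction m with
  | zero => simp
  | succ m ih => rw [Function.iterate_succ_apply']; exact constantCoeff_F _ ih

lemma stab : ∀ m k, k < m → coeff k (F^[m] 0) = coeff k (F^[m+1] 0) := by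
  intro m
  induction m with
  | zero => intro k hk; omega
  | succ m ih =>
    intro k hk
    rw [Function.iterate_succ_apply', Function.iterate_succ_apply' F (m+1)]
    exact coeff_F_congr k _ _ (constantCoeff_iter m) (constantCoeff_iter (m+1))
      (fun j hj => ih j (by omega))

lemma chain : ∀ m k, k < m → coeff k (F^[m] 0) = coeff k (F^[k+1] 0) := by
  intro m
  induction m with
  | zero => intro k hk; omega
  | succ m ih =>
    intro k hk
    rcases Nat.lt_or_ge k m with h | h
    · rw [← stab m k h]; exact ih k h
    · have : k = m := by omega
      subst this; rfl

noncomputable def Asol : PowerSeries ℚ := mk (fun n => coeff n (F^[n+1] 0))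

lemma coeff_Asol (n : ℕ) : coeff n Asol = coeff n (F^[n+1] 0) := by
  simp [Asol]

lemma constantCoeff_Asol : constantCoeff Asol = 0 := by
  have := coeff_Asol 0
  rw [PowerSeries.coeff_zero_eq_constantCoeff] at this
  rw [this]
  exact constantCoeff_iter 1

lemma fixed : F Asol = Asol := by
  ext n
  rw [coeff_Asol]
  have h1 : coeff n (F Asol) = coeff n (F (F^[n+1] 0)) := by
    apply coeff_F_congr n _ _ constantCoeff_Asol (constantCoeff_iter (n+1))
    intro k hk
    rw [coeff_Asol]
    exact (chain (n+1) k (by omega)).symm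
  rw [h1, ← Function.iterate_succ_apply' F (n+1)]
  exact (stab (n+1) n (by omega)).symm

def Pnat (A : PowerSeries ℚ) : Prop := ∀ n : ℕ, ∃ a : ℕ, coeff n A = (a : ℚ)

lemma Pnat_zero : Pnat 0 := fun n => ⟨0, by simp⟩

lemma Pnat_one : Pnat 1 := fun n => by
  by_cases h : n = 0
  · exact ⟨1, by simp [h]⟩
  · exact ⟨0, by simp [PowerSeries.coeff_one, h]⟩

lemma Pnat_X : Pnat X := fun n => by
  by_cases h : n = 1
  · exact ⟨1, by simp [h]⟩
  · exact ⟨0, by simp [PowerSeries.coeff_X, h]⟩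

lemma Pnat_add {A B : PowerSeries ℚ} (hA : Pnat A) (hB : Pnat B) : Pnat (A + B) := by
  intro n
  obtain ⟨a, ha⟩ := hA n
  obtain ⟨b, hb⟩ := hB n
  exact ⟨a + b, by rw [map_add, ha, hb]; push_cast; ring⟩

lemma Pnat_mul {A B : PowerSeries ℚ} (hA : Pnat A) (hB : Pnat B) : Pnat (A * B) := by
  intro n
  choose a ha using hA
  choose b hb using hB
  refine ⟨∑ p ∈ Finset.HasAntidiagonal.antidiagonal n, a p.1 * b p.2, ?_⟩
  rw [PowerSeries.coeff_mul]
  push_cast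
  exact Finset.sum_congr rfl fun p _ => by rw [ha, hb]

lemma Pnat_F {A : PowerSeries ℚ} (hA : Pnat A) : Pnat (F A) := by
  unfold F
  have h2 : Pnat (2 : PowerSeries ℚ) := by
    have := Pnat_add Pnat_one Pnat_one
    simpa [one_add_one_eq_two] using this
  have hX1 : Pnat (X + 1) := Pnat_add Pnat_X Pnat_one
  have hA2 : Pnat (A ^ 2) := by rw [sq]; exact Pnat_mul hA hA
  have hA3 : Pnat (A ^ 3) := by
    rw [pow_succ]; exact Pnat_mul hA2 hA
  exact Pnat_add (Pnat_add (Pnat_add Pnat_X (Pnat_mul (Pnat_mul h2 Pnat_X) hA))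
    (Pnat_mul hX1 hA2)) hA3

lemma Pnat_iter (m : ℕ) : Pnat (F^[m] 0) := by
  induction m with
  | zero => exact Pnat_zero
  | succ m ih => rw [Function.iterate_succ_apply']; exact Pnat_F ih

lemma Pnat_Asol : Pnat Asol := by
  intro n
  rw [coeff_Asol]
  exact Pnat_iter (n + 1) n

lemma Asol_eq : Asol ^ 3 + (X + 1) * Asol ^ 2 + (2 * X - 1) * Asol + X = 0 := by
  have h := fixed
  unfold F at h
  linear_combination h

lemma unique_sol (A : PowerSeries ℚ) (h0 : constantCoeff A = 0)
    (heq : A ^ 3 + (X + 1) * A ^ 2 + (2 * X - 1) * A + X = 0) : A = Asol := by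
  set B := Asol with hB
  have hB0 : constantCoeff B = 0 := constantCoeff_Asol
  have hBeq := Asol_eq
  have key : (A - B) * (A ^ 2 + A * B + B ^ 2 + (X + 1) * (A + B) + (2 * X - 1)) = 0 := by
    linear_combination heq - hBeq
  have hC : (A ^ 2 + A * B + B ^ 2 + (X + 1) * (A + B) + (2 * X - 1)) ≠ 0 := by
    intro hc
    have := congrArg (constantCoeff) hc
    simp [map_add, map_mul, map_pow, h0, hB0, map_sub] at this
  rcases mul_eq_zero.mp key with h | h
  · exact sub_eq_zero.mp h
  · exact absurd h hC

end SPaux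

/-- The algebraic equation `A³ + (y+1)A² + (2y-1)A + y = 0` with `A(0) = 0` has a
unique formal power series solution, and its coefficients are nonnegative integers. -/
theorem seriesParallel_algebraic :
    (∃! A : PowerSeries ℚ, PowerSeries.constantCoeff A = 0 ∧
        A ^ 3 + (X + 1) * A ^ 2 + (2 * X - 1) * A + X = 0) ∧
    (∀ A : PowerSeries ℚ, PowerSeries.constantCoeff A = 0 →
        A ^ 3 + (X + 1) * A ^ 2 + (2 * X - 1) * A + X = 0 →
        ∀ n : ℕ, ∃ a : ℕ, PowerSeries.coeff n A = (a : ℚ)) := by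
  constructor
  · refine ⟨SPaux.Asol, ⟨SPaux.constantCoeff_Asol, SPaux.Asol_eq⟩, ?_⟩
    intro A hA
    exact SPaux.unique_sol A hA.1 hA.2
  · intro A h0 heq n
    rw [SPaux.unique_sol A h0 heq]
    exact SPaux.Pnat_Asol n
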